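/- Let u¹,…,uᵐ ∈ ℝⁿ (unit vectors) with weights λ₁,…,λₘ > 0 form a John decomposition, and let x, y ∈ ℝⁿ satisfy ⟨x,uᵢ⟩ ≤ 1 and ⟨y,uᵢ⟩ ≤ 1 for every i ∈ {1,…,m}. Then ⟨x,y⟩ ≥ −n, with equality if and only if for every i ∈ {1,…,m} one has ⟨x,uᵢ⟩ = 1 or ⟨y,uᵢ⟩ = 1. -/

import Mathlib

open scoped InnerProductSpace BigOperators

/-- inner products of points below the supporting hyperplanes of a
John decomposition are at least `-n`, with equality characterization. -/
theorem stmt13 (n m : ℕ)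
    (u : Fin m → EuclideanSpace ℝ (Fin n)) (lam : Fin m → ℝ)
    (hu : ∀ i, ‖u i‖ = 1) (hlam : ∀ i, 0 < lam i)
    (hsum : ∑ i, lam i • u i = 0)
    (hdecomp : ∀ z : EuclideanSpace ℝ (Fin n), ∑ i, (lam i * ⟪u i, z⟫_ℝ) • u i = z)
    (x y : EuclideanSpace ℝ (Fin n))
    (hx : ∀ i, ⟪x, u i⟫_ℝ ≤ 1) (hy : ∀ i, ⟪y, u i⟫_ℝ ≤ 1) :
    -(n : ℝ) ≤ ⟪x, y⟫_ℝ ∧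
    (⟪x, y⟫_ℝ = -(n : ℝ) ↔ ∀ i, ⟪x, u i⟫_ℝ = 1 ∨ ⟪y, u i⟫_ℝ = 1) := by
  set a : Fin m → ℝ := fun i => ⟪x, u i⟫_ℝ with ha
  set b : Fin m → ℝ := fun i => ⟪y, u i⟫_ℝ with hb
  have hA : ∑ i, lam i * a i = 0 := by
    have := congrArg (fun z => ⟪x, z⟫_ℝ) hsum
    simpa only [inner_sum, real_inner_smul_right, inner_zero_right] using this
  have hB : ∑ i, lam i * b i = 0 := by
    have := congrArg (fun z => ⟪y, z⟫_ℝ) hsum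
    simpa only [inner_sum, real_inner_smul_right, inner_zero_right] using this
  -- trace fact : ∑ λᵢ = n
  have htr : ∑ i, lam i = (n : ℝ) := by
    have h1 : ∀ j : Fin n, ∑ i, lam i * (u i j * u i j) = 1 := by
      intro j
      have := congrArg (fun z => ⟪(EuclideanSpace.single j (1:ℝ)), z⟫_ℝ)
        (hdecomp (EuclideanSpace.single j (1:ℝ)))
      simp only [inner_sum, real_inner_smul_right, EuclideanSpace.inner_single_left,
        EuclideanSpace.inner_single_right, map_one, one_mul, mul_one,
        EuclideanSpace.single_apply, if_pos rfl] at this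
      calc ∑ i, lam i * (u i j * u i j) = ∑ i, lam i * u i j * u i j := by
            simp [mul_assoc]
        _ = 1 := this
    have h2 : ∀ i : Fin m, ∑ j : Fin n, u i j * u i j = 1 := by
      intro i
      have : ⟪u i, u i⟫_ℝ = 1 := by
        rw [real_inner_self_eq_norm_sq, hu i]; norm_num
      simpa only [PiLp.inner_apply, RCLike.inner_apply, conj_trivial, mul_comm] using this
    calc ∑ i, lam i = ∑ i, lam i * ∑ j : Fin n, u i j * u i j := by
          simp [h2]
      _ = ∑ i, ∑ j : Fin n, lam i * (u i j * u i j) := by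
          simp [Finset.mul_sum]
      _ = ∑ j : Fin n, ∑ i, lam i * (u i j * u i j) := Finset.sum_comm
      _ = ∑ _j : Fin n, (1:ℝ) := by simp [h1]
      _ = (n : ℝ) := by simp
  -- ⟪x, y⟫ = ∑ λᵢ aᵢ bᵢ
  have hxy : ⟪x, y⟫_ℝ = ∑ i, lam i * (a i * b i) := by
    have := congrArg (fun z => ⟪x, z⟫_ℝ) (hdecomp y)
    simp only [inner_sum, real_inner_smul_right] at this
    rw [← this]
    refine Finset.sum_congr rfl fun i _ => ?_
    rw [show ⟪u i, y⟫_ℝ = b i from real_inner_comm y (u i)]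
    ring
  have key : ∑ i, lam i * ((1 - a i) * (1 - b i)) = (n : ℝ) + ⟪x, y⟫_ℝ := by
    have expand : ∑ i, lam i * ((1 - a i) * (1 - b i)) =
        ∑ i, (lam i - lam i * a i - lam i * b i + lam i * (a i * b i)) :=
      Finset.sum_congr rfl fun i _ => by ring
    rw [expand]
    simp only [Finset.sum_add_distrib, Finset.sum_sub_distrib, hA, hB, htr, hxy]
    ring
  have hterm : ∀ i ∈ Finset.univ, 0 ≤ lam i * ((1 - a i) * (1 - b i)) := by
    intro i _
    exact mul_nonneg (hlam i).le
      (mul_nonneg (by linarith [hx i]) (by linarith [hy i]))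
  have hpos : (0:ℝ) ≤ (n : ℝ) + ⟪x, y⟫_ℝ := key ▸ Finset.sum_nonneg hterm
  refine ⟨by linarith, ?_⟩
  constructor
  · intro heq i
    have hz : ∑ i, lam i * ((1 - a i) * (1 - b i)) = 0 := by rw [key, heq]; ring
    have := (Finset.sum_eq_zero_iff_of_nonneg hterm).mp hz i (Finset.mem_univ i)
    have h0 : (1 - a i) * (1 - b i) = 0 := by
      rcases mul_eq_zero.mp this with h | h
      · exact absurd h (hlam i).ne'
      · exact h
    rcases mul_eq_zero.mp h0 with h | h
    · left; linarith
    · right; linarith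
  · intro h
    have hz : ∑ i, lam i * ((1 - a i) * (1 - b i)) = 0 := by
      refine Finset.sum_eq_zero fun i _ => ?_
      rcases h i with h1 | h1
      · rw [show a i = (1:ℝ) from h1]; ring
      · rw [show b i = (1:ℝ) from h1]; ring
    have := key ▸ hz
    linarith
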